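/- Let δ > 0 and x_m > 0 with x_m² + x_m⁴ = δ². Let x : [0,∞) → ℝ be continuously differentiable with x(0) = x_m, x'(s) > 0 for all s > 0, and x'(s)² = (x(s)² + x(s)⁴ − δ²)/x(s)² for all s ≥ 0. Define φ(s) = ∫ from 0 to s of δ/(x(t)·(x(t)² + 1)) dt, x₃(s) = √(x(s)² + 1)·sinh(φ(s)), and F(s) = x₃(s)·x'(s) − x₃'(s)·x(s). Then there exists s̃ > 0 such that F(s̃) = 0 and F(s) < 0 for all s ∈ [0, s̃). -/

import Mathlib

open Real Set MeasureTheory intervalIntegral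

set_option maxHeartbeats 1000000 in
theorem hyperbolic_catenoid_free_boundary_parameter (δ x_m : ℝ)
    (hδ : 0 < δ) (hxm : 0 < x_m) (hroot : x_m ^ 2 + x_m ^ 4 = δ ^ 2)
    (x x' : ℝ → ℝ)
    (hx : ∀ s ∈ Ici (0:ℝ), HasDerivWithinAt x (x' s) (Ici 0) s)
    (hx'cont : ContinuousOn x' (Ici 0))
    (hx0 : x 0 = x_m)
    (hx'pos : ∀ s : ℝ, 0 < s → 0 < x' s)
    (hode : ∀ s ∈ Ici (0:ℝ),
      (x' s) ^ 2 = ((x s) ^ 2 + (x s) ^ 4 - δ ^ 2) / (x s) ^ 2)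
    (φ x₃ x₃' F : ℝ → ℝ)
    (hφ : ∀ s : ℝ, φ s = ∫ t in (0:ℝ)..s, δ / (x t * ((x t) ^ 2 + 1)))
    (hx₃ : ∀ s : ℝ, x₃ s = Real.sqrt ((x s) ^ 2 + 1) * Real.sinh (φ s))
    (hx₃' : ∀ s ∈ Ici (0:ℝ), HasDerivWithinAt x₃ (x₃' s) (Ici 0) s)
    (hF : ∀ s : ℝ, F s = x₃ s * x' s - x₃' s * x s) :
    ∃ stilde : ℝ, 0 < stilde ∧ F stilde = 0 ∧ ∀ s : ℝ, 0 ≤ s → s < stilde → F s < 0 := by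
  -- basic continuity and monotonicity of x
  have hxc : ContinuousOn x (Ici 0) := fun s hs => (hx s hs).continuousWithinAt
  have hxmono : StrictMonoOn x (Ici 0) := by
    apply strictMonoOn_of_deriv_pos (convex_Ici 0) hxc
    intro s hs
    rw [interior_Ici, mem_Ioi] at hs
    rw [((hx s (le_of_lt hs)).hasDerivAt (Ici_mem_nhds hs)).deriv]
    exact hx'pos s hs
  have hxlb : ∀ s : ℝ, 0 ≤ s → x_m ≤ x s := by
    intro s hs
    rcases eq_or_lt_of_le hs with h | h
    · rw [← h, hx0]
    · rw [← hx0]; exact le_of_lt (hxmono self_mem_Ici (mem_Ici.2 (le_of_lt h)) h)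
  have hxpos : ∀ s : ℝ, 0 ≤ s → 0 < x s := fun s hs => lt_of_lt_of_le hxm (hxlb s hs)
  -- the integrand g
  set g : ℝ → ℝ := fun t => δ / (x t * ((x t) ^ 2 + 1)) with hg
  have hden : ∀ t : ℝ, 0 ≤ t → 0 < x t * ((x t) ^ 2 + 1) := by
    intro t ht
    exact mul_pos (hxpos t ht) (by positivity)
  have hgpos : ∀ t : ℝ, 0 ≤ t → 0 < g t := fun t ht => div_pos hδ (hden t ht)
  have hgc : ContinuousOn g (Ici 0) := by
    apply ContinuousOn.div continuousOn_const
    · exact hxc.mul (by fun_prop)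
    · intro t ht; exact ne_of_gt (hden t ht)
  have hgint : ∀ a b : ℝ, 0 ≤ a → 0 ≤ b → IntervalIntegrable g volume a b := by
    intro a b ha hb
    apply (hgc.mono _).intervalIntegrable
    intro t ht
    exact le_trans (le_inf ha hb) ht.1
  -- derivative of φ within Ici 0
  have hφfun : φ = fun u => ∫ t in (0:ℝ)..u, g t := funext hφ
  have hφd : ∀ s : ℝ, 0 ≤ s → HasDerivWithinAt φ (g s) (Ici 0) s := by
    intro s hs
    rw [hφfun]
    rcases eq_or_lt_of_le hs with h | h
    · subst h
      exact integral_hasDerivWithinAt_right (by simp)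
        ((hgc.mono Ioi_subset_Ici_self).stronglyMeasurableAtFilter_nhdsWithin measurableSet_Ioi 0)
        ((hgc 0 Set.self_mem_Ici).mono Ioi_subset_Ici_self)
    · have hxa : ∀ t : ℝ, 0 < t → ContinuousAt g t := by
        intro t ht
        exact (hgc t (le_of_lt ht)).continuousAt (Ici_mem_nhds ht)
      have : HasDerivAt (fun u => ∫ t in (0:ℝ)..u, g t) (g s) s := by
        apply integral_hasDerivAt_right (hgint 0 s le_rfl hs)
        · exact ContinuousAt.stronglyMeasurableAtFilter isOpen_Ioi hxa s h
        · exact hxa s h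
      exact this.hasDerivWithinAt
  have hφc : ContinuousOn φ (Ici 0) := fun s hs => (hφd s hs).continuousWithinAt
  have hφ0 : φ 0 = 0 := by rw [hφ]; simp
  have hφmono : StrictMonoOn φ (Ici 0) := by
    apply strictMonoOn_of_deriv_pos (convex_Ici 0) hφc
    intro s hs
    rw [interior_Ici] at hs
    rw [((hφd s (le_of_lt hs)).hasDerivAt (Ici_mem_nhds hs)).deriv]
    exact hgpos s (le_of_lt hs)
  -- formula for x₃'
  have hSpos : ∀ s : ℝ, (0:ℝ) < Real.sqrt ((x s) ^ 2 + 1) := by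
    intro s; exact Real.sqrt_pos.2 (by positivity)
  have hx₃'eq : ∀ s : ℝ, 0 ≤ s → x₃' s =
      (x s * x' s / Real.sqrt ((x s) ^ 2 + 1)) * Real.sinh (φ s)
        + Real.sqrt ((x s) ^ 2 + 1) * Real.cosh (φ s) * g s := by
    intro s hs
    have hx₃fun : x₃ = fun u => Real.sqrt ((x u) ^ 2 + 1) * Real.sinh (φ u) := funext hx₃
    have h1 : HasDerivWithinAt (fun u => (x u) ^ 2 + 1) (2 * x s * x' s) (Ici 0) s := by
      simpa using (((hx s hs).pow 2).add_const 1)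
    have h2 : HasDerivWithinAt (fun u => Real.sqrt ((x u) ^ 2 + 1))
        (x s * x' s / Real.sqrt ((x s) ^ 2 + 1)) (Ici 0) s := by
      have := (Real.hasDerivAt_sqrt (show (x s) ^ 2 + 1 ≠ 0 by positivity)).comp_hasDerivWithinAt s h1
      refine this.congr_deriv ?_
      rw [mul_comm]
      field_simp
    have h3 : HasDerivWithinAt (fun u => Real.sinh (φ u)) (Real.cosh (φ s) * g s) (Ici 0) s :=
      (Real.hasDerivAt_sinh (φ s)).comp_hasDerivWithinAt s (hφd s hs)
    have h4 : HasDerivWithinAt x₃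
        ((x s * x' s / Real.sqrt ((x s) ^ 2 + 1)) * Real.sinh (φ s)
          + Real.sqrt ((x s) ^ 2 + 1) * (Real.cosh (φ s) * g s)) (Ici 0) s := by
      rw [hx₃fun]; exact h2.mul h3
    have hu := (hx₃' s hs).derivWithin (uniqueDiffOn_Ici 0 s hs)
    have hu2 := h4.derivWithin (uniqueDiffOn_Ici 0 s hs)
    rw [← hu, hu2]; ring
  -- sign-equivalent function G
  set G : ℝ → ℝ := fun s => x' s * Real.sinh (φ s) - δ * Real.cosh (φ s) with hGdef
  have hFG : ∀ s : ℝ, 0 ≤ s → F s = G s / Real.sqrt ((x s) ^ 2 + 1) := by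
    intro s hs
    have hxne : x s ≠ 0 := ne_of_gt (hxpos s hs)
    show F s = (x' s * Real.sinh (φ s) - δ * Real.cosh (φ s)) / Real.sqrt ((x s) ^ 2 + 1)
    rw [hF, hx₃, hx₃'eq s hs]
    show Real.sqrt ((x s) ^ 2 + 1) * Real.sinh (φ s) * x' s -
        (x s * x' s / Real.sqrt ((x s) ^ 2 + 1) * Real.sinh (φ s)
          + Real.sqrt ((x s) ^ 2 + 1) * Real.cosh (φ s) * (δ / (x s * ((x s) ^ 2 + 1)))) * x s = _
    set S := Real.sqrt ((x s) ^ 2 + 1) with hSdef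
    have hS : (0:ℝ) < S := hSpos s
    have hS2 : S ^ 2 = (x s) ^ 2 + 1 := Real.sq_sqrt (by positivity)
    rw [← hS2]
    field_simp
    linear_combination (Real.sinh (φ s) * x' s) * hS2
  have hGc : ContinuousOn G (Ici 0) :=
    (hx'cont.mul (Real.continuous_sinh.comp_continuousOn hφc)).sub
      (continuousOn_const.mul (Real.continuous_cosh.comp_continuousOn hφc))
  have hG0 : G 0 = -δ := by
    show x' 0 * Real.sinh (φ 0) - δ * Real.cosh (φ 0) = -δ
    rw [hφ0]; simp
  -- lower bound on x' for s ≥ 1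
  have hx1 : x_m < x 1 := by
    rw [← hx0]
    exact hxmono Set.self_mem_Ici (by norm_num) one_pos
  have hx1pos : 0 < x 1 := lt_trans hxm hx1
  have hx'sq : ∀ s : ℝ, 0 ≤ s →
      x' s ^ 2 = 1 + x s ^ 2 - δ ^ 2 / x s ^ 2 := by
    intro s hs
    have hxne : x s ≠ 0 := ne_of_gt (hxpos s hs)
    rw [hode s hs]
    field_simp
  have hkey : ∀ s : ℝ, 1 ≤ s → 1 + x 1 ^ 2 - δ ^ 2 / x 1 ^ 2 ≤ x' s ^ 2 := by
    intro s hs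
    have hs0 : (0:ℝ) ≤ s := le_trans zero_le_one hs
    have hxs1 : x 1 ≤ x s := by
      rcases eq_or_lt_of_le hs with h | h
      · rw [h]
      · exact le_of_lt (hxmono (by norm_num) (mem_Ici.2 hs0) h)
    have h1 : x 1 ^ 2 ≤ x s ^ 2 := by nlinarith
    have h2 : δ ^ 2 / x s ^ 2 ≤ δ ^ 2 / x 1 ^ 2 :=
      div_le_div_of_nonneg_left (by positivity) (by positivity) h1
    rw [hx'sq s hs0]
    linarith
  have hc2pos : 0 < 1 + x 1 ^ 2 - δ ^ 2 / x 1 ^ 2 := by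
    rw [show 1 + x 1 ^ 2 - δ ^ 2 / x 1 ^ 2 = (x 1 ^ 2 + x 1 ^ 4 - δ ^ 2) / x 1 ^ 2 by
      field_simp]
    apply div_pos _ (by positivity)
    have h2 : x_m ^ 2 < x 1 ^ 2 := by nlinarith
    have h4 : x_m ^ 4 < x 1 ^ 4 := by nlinarith
    linarith
  obtain ⟨c, hcdef⟩ : ∃ c : ℝ, c = Real.sqrt (1 + x 1 ^ 2 - δ ^ 2 / x 1 ^ 2) := ⟨_, rfl⟩
  have hcpos : 0 < c := by rw [hcdef]; exact Real.sqrt_pos.2 hc2pos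
  have hx'lb : ∀ s : ℝ, 1 ≤ s → c ≤ x' s := by
    intro s hs
    have h := hkey s hs
    have hx'nn : 0 ≤ x' s := le_of_lt (hx'pos s (lt_of_lt_of_le one_pos hs))
    calc c = Real.sqrt (1 + x 1 ^ 2 - δ ^ 2 / x 1 ^ 2) := hcdef
      _ ≤ Real.sqrt (x' s ^ 2) := Real.sqrt_le_sqrt h
      _ = x' s := Real.sqrt_sq hx'nn
  -- growth of x
  have hgrowth : ∀ y : ℝ, 1 ≤ y → c * (y - 1) ≤ x y - x 1 := by
    intro y hy
    have hdiff : DifferentiableOn ℝ x (interior (Ici (1:ℝ))) := by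
      rw [interior_Ici]
      intro t ht
      have ht0 : (0:ℝ) < t := lt_trans one_pos ht
      exact ((hx t (le_of_lt ht0)).hasDerivAt (Ici_mem_nhds ht0)).differentiableAt.differentiableWithinAt
    refine Convex.mul_sub_le_image_sub_of_le_deriv (convex_Ici 1)
      (hxc.mono (Ici_subset_Ici.2 zero_le_one)) hdiff (fun t ht => ?_)
      1 Set.self_mem_Ici y (mem_Ici.2 hy) hy
    rw [interior_Ici] at ht
    have ht0 : (0:ℝ) < t := lt_trans one_pos ht
    rw [((hx t (le_of_lt ht0)).hasDerivAt (Ici_mem_nhds ht0)).deriv]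
    exact hx'lb t (le_of_lt ht)
  -- the quantity τ
  have hφ1pos : 0 < φ 1 := by
    rw [← hφ0]
    exact hφmono Set.self_mem_Ici (by norm_num) one_pos
  have hshpos : 0 < Real.sinh (φ 1) := Real.sinh_pos_iff.2 hφ1pos
  obtain ⟨τ, hτdef⟩ : ∃ τ : ℝ, τ = Real.sinh (φ 1) / Real.cosh (φ 1) := ⟨_, rfl⟩
  have hτpos : 0 < τ := by rw [hτdef]; exact div_pos hshpos (Real.cosh_pos _)
  -- choose b with G b ≥ 0
  obtain ⟨R, hRdef⟩ : ∃ R : ℝ, R = Real.sqrt (δ ^ 2 / x_m ^ 2 + (δ / τ) ^ 2) := ⟨_, rfl⟩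
  have hRnn : 0 ≤ R := by rw [hRdef]; exact Real.sqrt_nonneg _
  obtain ⟨b, hbdef⟩ : ∃ b : ℝ, b = 1 + (R + 1) / c := ⟨_, rfl⟩
  have hb1 : 1 ≤ b := by
    have : 0 ≤ (R + 1) / c := div_nonneg (by linarith) (le_of_lt hcpos)
    rw [hbdef]; linarith
  have hb0 : (0:ℝ) ≤ b := le_trans zero_le_one hb1
  have hxbR : R < x b := by
    have h := hgrowth b hb1
    have hb1' : b - 1 = (R + 1) / c := by rw [hbdef]; ring
    rw [hb1', mul_div_cancel₀ _ (ne_of_gt hcpos)] at h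
    linarith
  have hxb2 : δ ^ 2 / x_m ^ 2 + (δ / τ) ^ 2 < x b ^ 2 := by
    have h : R ^ 2 < x b ^ 2 := by nlinarith
    rwa [hRdef, Real.sq_sqrt (by positivity)] at h
  have hx'b : δ / τ < x' b := by
    have h1 : x' b ^ 2 = 1 + x b ^ 2 - δ ^ 2 / x b ^ 2 := hx'sq b hb0
    have h2 : δ ^ 2 / x b ^ 2 ≤ δ ^ 2 / x_m ^ 2 := by
      apply div_le_div_of_nonneg_left (by positivity) (by positivity)
      have := hxlb b hb0
      nlinarith
    have h3 : (δ / τ) ^ 2 < x' b ^ 2 := by linarith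
    exact lt_of_pow_lt_pow_left₀ 2 (le_of_lt (hx'pos b (lt_of_lt_of_le one_pos hb1))) h3
  have hGb : 0 ≤ G b := by
    have hφb : φ 1 ≤ φ b := by
      rcases eq_or_lt_of_le hb1 with h | h
      · rw [h]
      · exact le_of_lt (hφmono (by norm_num) (mem_Ici.2 hb0) h)
    have hsc : τ * Real.cosh (φ b) ≤ Real.sinh (φ b) := by
      rw [hτdef, div_mul_eq_mul_div, div_le_iff₀ (Real.cosh_pos _)]
      have hsub : 0 ≤ Real.sinh (φ b - φ 1) := Real.sinh_nonneg_iff.2 (by linarith)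
      rw [Real.sinh_sub] at hsub
      linarith
    have hx'bpos : 0 < x' b := hx'pos b (lt_of_lt_of_le one_pos hb1)
    show 0 ≤ x' b * Real.sinh (φ b) - δ * Real.cosh (φ b)
    have hchb : 0 < Real.cosh (φ b) := Real.cosh_pos _
    have hpos : 0 < τ * Real.cosh (φ b) := mul_pos hτpos hchb
    have h5 : δ * Real.cosh (φ b) < x' b * (τ * Real.cosh (φ b)) := by
      calc δ * Real.cosh (φ b) = (δ / τ) * (τ * Real.cosh (φ b)) := by
            field_simp
          _ < x' b * (τ * Real.cosh (φ b)) := mul_lt_mul_of_pos_right hx'b hpos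
    have h6 : x' b * (τ * Real.cosh (φ b)) ≤ x' b * Real.sinh (φ b) :=
      mul_le_mul_of_nonneg_left hsc (le_of_lt hx'bpos)
    linarith
  -- intermediate value and first zero
  have hGcIcc : ContinuousOn G (Icc 0 b) := hGc.mono Icc_subset_Ici_self
  have hIVT := intermediate_value_Icc hb0 hGcIcc
  have h0mem : (0:ℝ) ∈ Icc (G 0) (G b) := ⟨by rw [hG0]; linarith, hGb⟩
  obtain ⟨c₀, hc₀mem, hc₀⟩ := hIVT h0mem
  obtain ⟨K, hKdef⟩ : ∃ K : Set ℝ, K = Icc 0 b ∩ G ⁻¹' {0} := ⟨_, rfl⟩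
  have hKne : K.Nonempty := ⟨c₀, by rw [hKdef]; exact ⟨hc₀mem, by simpa using hc₀⟩⟩
  have hKbdd : BddBelow K := ⟨0, fun t ht => by rw [hKdef] at ht; exact ht.1.1⟩
  have hKclosed : IsClosed K := by
    rw [hKdef]
    exact hGcIcc.preimage_isClosed_of_isClosed isClosed_Icc isClosed_singleton
  obtain ⟨stilde, hstdef⟩ : ∃ t : ℝ, t = sInf K := ⟨_, rfl⟩
  have hstmem : stilde ∈ K := by rw [hstdef]; exact hKclosed.csInf_mem hKne hKbdd
  rw [hKdef] at hstmem
  have hst0 : 0 ≤ stilde := hstmem.1.1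
  have hstG : G stilde = 0 := by simpa using hstmem.2
  have hstpos : 0 < stilde := by
    rcases eq_or_lt_of_le hst0 with h | h
    · exfalso
      rw [← h, hG0] at hstG
      linarith
    · exact h
  refine ⟨stilde, hstpos, ?_, ?_⟩
  · rw [hFG stilde hst0, hstG, zero_div]
  · intro s hs hsl
    have hsb : s ≤ b := le_trans (le_of_lt hsl) hstmem.1.2
    have hGne : G s ≠ 0 := by
      intro h
      have : stilde ≤ s := by
        rw [hstdef]
        exact csInf_le hKbdd (by rw [hKdef]; exact ⟨⟨hs, hsb⟩, by simpa using h⟩)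
      linarith
    have hGneg : G s < 0 := by
      rcases lt_or_gt_of_ne hGne with h | h
      · exact h
      · exfalso
        have hIVT2 := intermediate_value_Icc hs (hGcIcc.mono (Icc_subset_Icc le_rfl hsb))
        obtain ⟨c₁, hc₁mem, hc₁⟩ := hIVT2 ⟨by rw [hG0]; linarith, le_of_lt h⟩
        have hlec : stilde ≤ c₁ := by
          rw [hstdef]
          exact csInf_le hKbdd
            (by rw [hKdef]; exact ⟨⟨hc₁mem.1, le_trans hc₁mem.2 hsb⟩, by simpa using hc₁⟩)
        have := hc₁mem.2
        linarith
    rw [hFG s hs]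
    exact div_neg_of_neg_of_pos hGneg (hSpos s)
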